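/- Let U be a finite set and F = (S_1, …, S_m) a family of nonempty subsets of U, and let G(U,F) be the associated split graph. For every Roman dominating function f on G(U,F) there exists a Roman dominating function g on G(U,F) with w(g) ≤ w(f) and g(v) = 0 for every set-vertex v ∈ {s_j^i : j ∈ [m], i ∈ {1,2}}. -/

import Mathlib

def splitAdj {α : Type*} {m : ℕ} (F : Fin m → Finset α) :
    (α ⊕ Fin m × Fin 2) → (α ⊕ Fin m × Fin 2) → Prop
  | .inl u, .inl v => u ≠ v
  | .inl u, .inr p => u ∈ F p.1
  | .inr p, .inl u => u ∈ F p.1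
  | .inr _, .inr _ => False

def splitGraph {α : Type*} {m : ℕ} (F : Fin m → Finset α) :
    SimpleGraph (α ⊕ Fin m × Fin 2) where
  Adj := splitAdj F
  symm := ⟨by rintro (u|p) (v|q) h <;> simp_all [splitAdj]; exact Ne.symm h⟩
  loopless := ⟨by rintro (u|p) h <;> simp_all [splitAdj]⟩

private lemma sum_update_add {β : Type*} [Fintype β] [DecidableEq β]
    (f : β → ℕ) (a : β) (c : ℕ) :
    (∑ x, Function.update f a c x) + f a = (∑ x, f x) + c := by
  classical
  rw [Finset.sum_update_of_mem (Finset.mem_univ a),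
    ← Finset.add_sum_erase _ f (Finset.mem_univ a),
    Finset.sdiff_singleton_eq_erase]
  omega

private lemma adj_of_inr {α : Type*} {m : ℕ} {F : Fin m → Finset α}
    {p : Fin m × Fin 2} {y} (h : (splitGraph F).Adj (Sum.inr p) y) :
    ∃ v, y = Sum.inl v ∧ v ∈ F p.1 := by
  cases y with
  | inl v => exact ⟨v, rfl, h⟩
  | inr q => exact h.elim

private lemma split_aux {α : Type*} [Fintype α] {m : ℕ} (F : Fin m → Finset α)
    (hne : ∀ j, (F j).Nonempty) :
    ∀ n (f : (α ⊕ Fin m × Fin 2) → ℕ), (∀ x, f x ≤ 2) →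
    (∀ x, f x = 0 → ∃ y, (splitGraph F).Adj x y ∧ f y = 2) →
    (∑ p : Fin m × Fin 2, f (Sum.inr p)) ≤ n →
    ∃ g : (α ⊕ Fin m × Fin 2) → ℕ, (∀ x, g x ≤ 2) ∧
      (∀ x, g x = 0 → ∃ y, (splitGraph F).Adj x y ∧ g y = 2) ∧
      (∑ x, g x) ≤ (∑ x, f x) ∧
      (∀ p : Fin m × Fin 2, g (Sum.inr p) = 0) := by
  classical
  intro n
  induction n with
  | zero =>
    intro f hr hd hm
    exact ⟨f, hr, hd, le_refl _,
      fun p => Finset.sum_eq_zero_iff.mp (Nat.le_zero.mp hm) p (Finset.mem_univ p)⟩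
  | succ n ih =>
    intro f hr hd hm
    by_cases h0 : ∀ p : Fin m × Fin 2, f (Sum.inr p) = 0
    · exact ⟨f, hr, hd, le_refl _, h0⟩
    push_neg at h0
    obtain ⟨⟨j, i⟩, hp⟩ := h0
    -- abbreviation for the restriction to set-vertices
    set h0f : Fin m × Fin 2 → ℕ := fun q => f (Sum.inr q) with hh0f
    have hi : i = 0 ∨ i = 1 := by omega
    have ht1 : 1 ≤ f (Sum.inr (j, 0)) + f (Sum.inr (j, 1)) := by
      rcases hi with rfl | rfl <;> omega
    rcases Nat.lt_or_ge (f (Sum.inr (j, 0)) + f (Sum.inr (j, 1))) 2 with hlt | hge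
    · -- total weight on the two copies is exactly 1
      have hcase : (f (Sum.inr (j,0)) = 0 ∧ f (Sum.inr (j,1)) = 1) ∨
          (f (Sum.inr (j,1)) = 0 ∧ f (Sum.inr (j,0)) = 1) := by omega
      have key : ∀ i₀ i₁ : Fin 2, f (Sum.inr (j, i₀)) = 0 → f (Sum.inr (j, i₁)) = 1 →
          ∃ g : (α ⊕ Fin m × Fin 2) → ℕ, (∀ x, g x ≤ 2) ∧
            (∀ x, g x = 0 → ∃ y, (splitGraph F).Adj x y ∧ g y = 2) ∧
            (∑ x, g x) ≤ (∑ x, f x) ∧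
            (∀ p : Fin m × Fin 2, g (Sum.inr p) = 0) := by
        intro i₀ i₁ h₀ h₁
        obtain ⟨y, hadj, hy2⟩ := hd (Sum.inr (j, i₀)) h₀
        obtain ⟨v, rfl, hv⟩ := adj_of_inr hadj
        set g := Function.update f (Sum.inr (j, i₁)) 0 with hg
        have gval : ∀ x, x ≠ Sum.inr (j, i₁) → g x = f x := fun x hx =>
          Function.update_of_ne hx _ _
        have g1 : g (Sum.inr (j, i₁)) = 0 := Function.update_self _ _ _
        have grange : ∀ x, g x ≤ 2 := by
          intro x
          by_cases hx : x = Sum.inr (j, i₁)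
          · rw [hx, g1]; omega
          · rw [gval x hx]; exact hr x
        have gRDF : ∀ x, g x = 0 → ∃ y, (splitGraph F).Adj x y ∧ g y = 2 := by
          intro x hx
          by_cases hxe : x = Sum.inr (j, i₁)
          · subst hxe
            refine ⟨Sum.inl v, hv, ?_⟩
            rw [gval _ (by simp)]; exact hy2
          · have hfx : f x = 0 := by rw [← gval x hxe]; exact hx
            obtain ⟨y, hadj2, hy⟩ := hd x hfx
            have hyne : y ≠ Sum.inr (j, i₁) := by
              intro h; rw [h, h₁] at hy; omega
            exact ⟨y, hadj2, by rw [gval y hyne]; exact hy⟩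
        have e : (∑ x, g x) + f (Sum.inr (j, i₁)) = (∑ x, f x) + 0 :=
          sum_update_add f _ 0
        have hcomp : (fun q : Fin m × Fin 2 => g (Sum.inr q)) =
            Function.update h0f (j, i₁) 0 := by
          funext q
          by_cases hq : q = (j, i₁)
          · rw [hq]; simp [g1, Function.update_self]
          · rw [gval _ (by simp [hq]), Function.update_of_ne hq]
        have e2 : (∑ q : Fin m × Fin 2, g (Sum.inr q)) + h0f (j, i₁) =
            (∑ q : Fin m × Fin 2, h0f q) + 0 := by
          rw [hcomp]; exact sum_update_add h0f _ 0
        have hm' : (∑ q : Fin m × Fin 2, g (Sum.inr q)) ≤ n := by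
          have hmn : (∑ q : Fin m × Fin 2, h0f q) ≤ n + 1 := hm
          have : h0f (j, i₁) = 1 := h₁
          omega
        obtain ⟨g', hg'r, hg'd, hg's, hg'0⟩ := ih g grange gRDF hm'
        exact ⟨g', hg'r, hg'd, by omega, hg'0⟩
      rcases hcase with ⟨h₀, h₁⟩ | ⟨h₀, h₁⟩
      · exact key 0 1 h₀ h₁
      · exact key 1 0 h₀ h₁
    · -- total weight on the two copies is at least 2
      obtain ⟨u, hu⟩ := hne j
      set f1 := Function.update f (Sum.inr (j, 0)) 0 with hf1
      set f2 := Function.update f1 (Sum.inr (j, 1)) 0 with hf2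
      set g := Function.update f2 (Sum.inl u) 2 with hg
      have gu : g (Sum.inl u) = 2 := Function.update_self _ _ _
      have gv : ∀ v : α, v ≠ u → g (Sum.inl v) = f (Sum.inl v) := by
        intro v hv
        simp [hg, hf2, hf1, Function.update_apply, hv]
      have g0 : ∀ i : Fin 2, g (Sum.inr (j, i)) = 0 := by
        intro i'
        have : i' = 0 ∨ i' = 1 := by omega
        rcases this with rfl | rfl <;>
          simp [hg, hf2, hf1, Function.update_apply, Prod.ext_iff]
      have gq : ∀ q : Fin m × Fin 2, q ≠ (j,0) → q ≠ (j,1) →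
          g (Sum.inr q) = f (Sum.inr q) := by
        intro q h1 h2
        simp [hg, hf2, hf1, Function.update_apply, h1, h2]
      have grange : ∀ x, g x ≤ 2 := by
        rintro (v | q)
        · by_cases hvu : v = u
          · rw [hvu, gu]
          · rw [gv v hvu]; exact hr _
        · by_cases h1 : q = (j,0)
          · rw [h1]; rw [g0 0]; omega
          · by_cases h2 : q = (j,1)
            · rw [h2, g0 1]; omega
            · rw [gq q h1 h2]; exact hr _
      have gRDF : ∀ x, g x = 0 → ∃ y, (splitGraph F).Adj x y ∧ g y = 2 := by
        rintro (v | q) hx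
        · have hvu : v ≠ u := by intro h; rw [h, gu] at hx; omega
          exact ⟨Sum.inl u, hvu, gu⟩
        · by_cases hqj : q.1 = j
          · refine ⟨Sum.inl u, ?_, gu⟩
            show u ∈ F q.1
            rw [hqj]; exact hu
          · have h1 : q ≠ (j,0) := by intro h; rw [h] at hqj; exact hqj rfl
            have h2 : q ≠ (j,1) := by intro h; rw [h] at hqj; exact hqj rfl
            have hfq : f (Sum.inr q) = 0 := by rw [← gq q h1 h2]; exact hx
            obtain ⟨y, hadj, hy⟩ := hd _ hfq
            obtain ⟨v, rfl, hvF⟩ := adj_of_inr hadj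
            by_cases hvu : v = u
            · exact ⟨Sum.inl u, by rw [hvu] at hvF; exact hvF, gu⟩
            · exact ⟨Sum.inl v, hvF, by rw [gv v hvu]; exact hy⟩
      -- weight bound
      have e1 : (∑ x, f1 x) + f (Sum.inr (j, 0)) = (∑ x, f x) + 0 :=
        sum_update_add f _ 0
      have hf1v : f1 (Sum.inr (j, 1)) = f (Sum.inr (j, 1)) := by
        simp [hf1, Function.update_apply, Prod.ext_iff]
      have e2 : (∑ x, f2 x) + f1 (Sum.inr (j, 1)) = (∑ x, f1 x) + 0 :=
        sum_update_add f1 _ 0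
      have hf2v : f2 (Sum.inl u) = f (Sum.inl u) := by
        simp [hf2, hf1, Function.update_apply]
      have e3 : (∑ x, g x) + f2 (Sum.inl u) = (∑ x, f2 x) + 2 :=
        sum_update_add f2 _ 2
      have hsum : (∑ x, g x) ≤ ∑ x, f x := by omega
      -- measure bound
      have hcomp : (fun q : Fin m × Fin 2 => g (Sum.inr q)) =
          Function.update (Function.update h0f (j, 0) 0) (j, 1) 0 := by
        funext q
        by_cases h1 : q = (j, 1)
        · rw [h1, Function.update_self]; exact g0 1
        · rw [Function.update_of_ne h1]
          by_cases h2 : q = (j, 0)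
          · rw [h2, Function.update_self]; exact g0 0
          · rw [Function.update_of_ne h2, gq q h2 h1]
      have m1 : (∑ q : Fin m × Fin 2, g (Sum.inr q)) +
          (Function.update h0f (j, 0) 0) (j, 1) =
          (∑ q : Fin m × Fin 2, (Function.update h0f (j, 0) 0) q) + 0 := by
        rw [hcomp]; exact sum_update_add _ _ 0
      have m2 : (∑ q : Fin m × Fin 2, (Function.update h0f (j, 0) 0) q) + h0f (j, 0) =
          (∑ q : Fin m × Fin 2, h0f q) + 0 := sum_update_add h0f _ 0
      have mval : (Function.update h0f (j, 0) 0) (j, 1) = h0f (j, 1) := by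
        rw [Function.update_of_ne (by simp [Prod.ext_iff])]
      have hja : h0f (j, 0) = f (Sum.inr (j, 0)) := rfl
      have hjb : h0f (j, 1) = f (Sum.inr (j, 1)) := rfl
      have hm' : (∑ q : Fin m × Fin 2, g (Sum.inr q)) ≤ n := by
        have hmn : (∑ q : Fin m × Fin 2, h0f q) ≤ n + 1 := hm
        omega
      obtain ⟨g', hg'r, hg'd, hg's, hg'0⟩ := ih g grange gRDF hm'
      exact ⟨g', hg'r, hg'd, le_trans hg's hsum, hg'0⟩

theorem splitGraph_rdf_zero_on_set_vertices
    {α : Type*} [Fintype α] {m : ℕ} (F : Fin m → Finset α)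
    (hne : ∀ j, (F j).Nonempty)
    (f : (α ⊕ Fin m × Fin 2) → ℕ) (hrange : ∀ x, f x ≤ 2)
    (hRDF : ∀ x, f x = 0 → ∃ y, (splitGraph F).Adj x y ∧ f y = 2) :
    ∃ g : (α ⊕ Fin m × Fin 2) → ℕ, (∀ x, g x ≤ 2) ∧
      (∀ x, g x = 0 → ∃ y, (splitGraph F).Adj x y ∧ g y = 2) ∧
      (∑ x, g x) ≤ (∑ x, f x) ∧
      (∀ p : Fin m × Fin 2, g (Sum.inr p) = 0) := by
  exact split_aux F hne (∑ p : Fin m × Fin 2, f (Sum.inr p)) f hrange hRDF le_rfl
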